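/- Let Ω ⊆ ℝ^n be open and E ⊆ ℝ^n measurable with Per_K(E,Ω) < ∞. Then E is K-outward minimizing in Ω if and only if for every measurable A ⊆ Ω∖E compactly contained in Ω one has ∫_A ∫_E K(x−y) dy dx ≤ ∫_A ∫_{ℝ^n∖(A∪E)} K(x−y) dy dx. -/

import Mathlib

open MeasureTheory Set Filter Metric Topology
open scoped ENNReal Pointwise

noncomputable section

abbrev Euc (n : ℕ) := EuclideanSpace ℝ (Fin n)

/-- Admissible kernel: measurable, nonnegative and even away from the origin,
with `∫ min(1,|x|) K(x) dx < ∞`. -/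
def KernelOK {n : ℕ} (K : Euc n → ℝ) : Prop :=
  Measurable K ∧ (∀ x : Euc n, x ≠ 0 → 0 ≤ K x) ∧ (∀ x : Euc n, x ≠ 0 → K (-x) = K x) ∧
    (∫⁻ x : Euc n, ENNReal.ofReal (min 1 ‖x‖ * K x)) < ⊤

/-- The `K`-perimeter of `E` in `Ω`. -/
def perK {n : ℕ} (K : Euc n → ℝ) (E Ω : Set (Euc n)) : ℝ≥0∞ :=
  (∫⁻ x in E, ∫⁻ y in Ω \ E, ENNReal.ofReal (K (x - y))) +
  (∫⁻ x in E ∩ Ω, ∫⁻ y in (Ω ∪ E)ᶜ, ENNReal.ofReal (K (x - y)))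

/-- The (total) `K`-perimeter of `E`. -/
def perKtot {n : ℕ} (K : Euc n → ℝ) (E : Set (Euc n)) : ℝ≥0∞ :=
  ∫⁻ x in E, ∫⁻ y in Eᶜ, ENNReal.ofReal (K (x - y))

/-- `A` is compactly contained in `Ω`. -/
def CptIn {n : ℕ} (A Ω : Set (Euc n)) : Prop :=
  IsCompact (closure A) ∧ closure A ⊆ Ω

/-- `E` is `K`-outward minimizing in `Ω`. -/
def OutMin {n : ℕ} (K : Euc n → ℝ) (E Ω : Set (Euc n)) : Prop :=
  ∀ F : Set (Euc n), MeasurableSet F → E ⊆ F → CptIn (F \ E) Ω →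
    perK K E Ω ≤ perK K F Ω

/-- `E` is strongly `K`-outward minimizing in `Ω` with constant `δ`. -/
def StrongOutMin {n : ℕ} (K : Euc n → ℝ) (δ : ℝ) (E Ω : Set (Euc n)) : Prop :=
  ∀ F : Set (Euc n), MeasurableSet F → E ⊆ F → CptIn (F \ E) Ω →
    perK K E Ω + ENNReal.ofReal δ * volume (F \ E) ≤ perK K F Ω

end
noncomputable section
open MeasureTheory Set Filter Metric Topology
open scoped ENNReal Pointwise

/-- The truncated `K`-curvature of `G` at `x`, with truncation parameter `ε`:
`∫_{ℝⁿ∖B(x,ε)} (χ_{Gᶜ}(y) − χ_G(y)) K(x−y) dy`. -/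
def truncCurv {n : ℕ} (K : Euc n → ℝ) (G : Set (Euc n)) (x : Euc n) (ε : ℝ) : ℝ :=
  ∫ y in (Metric.ball x ε)ᶜ,
    ((Gᶜ).indicator (fun _ => (1:ℝ)) y - G.indicator (fun _ => (1:ℝ)) y) * K (x - y)

/-- `G` has compact boundary of class `C^{1,1}`: the boundary is compact, and `G` is the
sublevel set of a `C^1` function with Lipschitz gradient which is nondegenerate on the
boundary. -/
def HasCptC11Boundary {n : ℕ} (G : Set (Euc n)) : Prop :=
  IsCompact (frontier G) ∧
  ∃ φ : Euc n → ℝ, ContDiff ℝ 1 φ ∧ (∃ L : NNReal, LipschitzWith L (fderiv ℝ φ)) ∧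
    G = {x | φ x ≤ 0} ∧ frontier G = {x | φ x = 0} ∧
    ∀ x ∈ frontier G, fderiv ℝ φ x ≠ 0

/-- `H^K_A(x) ≥ c` in the viscosity sense: every set `G` with compact `C^{1,1}` boundary
with `G ⊆ A` and `x ∈ ∂G` has `K`-curvature at least `c` at `x` (the curvature being the
limit of the truncated curvatures). -/
def ViscCurvGE {n : ℕ} (K : Euc n → ℝ) (A : Set (Euc n)) (x : Euc n) (c : ℝ) : Prop :=
  ∀ G : Set (Euc n), HasCptC11Boundary G → G ⊆ A → x ∈ frontier G →
    ∀ L : ℝ, Tendsto (truncCurv K G x) (𝓝[>] (0:ℝ)) (𝓝 L) → c ≤ L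

/-- Signed distance function from `E` (positive inside). -/
def sgnDist {n : ℕ} (E : Set (Euc n)) (x : Euc n) : ℝ :=
  Metric.infDist x Eᶜ - Metric.infDist x E

/-- The Almgren–Taylor–Wang energy `Per_K(G) − (1/h)∫_G d_E`. -/
def atwEnergy {n : ℕ} (K : Euc n → ℝ) (E : Set (Euc n)) (h : ℝ) (G : Set (Euc n)) : ℝ :=
  (perKtot K G).toReal - (1/h) * ∫ x in G, sgnDist E x

/-- `T` is an ATW minimizer for `E` at step `h`: it minimizes the ATW energy among all
measurable sets (competitors with infinite energy being irrelevant). -/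
def ATWMin {n : ℕ} (K : Euc n → ℝ) (E : Set (Euc n)) (h : ℝ) (T : Set (Euc n)) : Prop :=
  MeasurableSet T ∧ perKtot K T < ⊤ ∧ IntegrableOn (sgnDist E) T ∧
  ∀ G : Set (Euc n), MeasurableSet G → perKtot K G < ⊤ → IntegrableOn (sgnDist E) G →
    atwEnergy K E h T ≤ atwEnergy K E h G

/-- The set of Lebesgue density-one points of `T`. -/
def densityPts {n : ℕ} (T : Set (Euc n)) : Set (Euc n) :=
  {x | Tendsto (fun ρ : ℝ =>
      volume (T ∩ Metric.closedBall x ρ) / volume (Metric.closedBall x ρ))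
    (𝓝[>] (0:ℝ)) (𝓝 1)}

/-- The nonlocal functional `J_K(v) = ½∬ |v(x)−v(y)| K(x−y) dx dy`. -/
def JK {n : ℕ} (K : Euc n → ℝ) (v : Euc n → ℝ) : ℝ≥0∞ :=
  (1/2 : ℝ≥0∞) * ∫⁻ x : Euc n, ∫⁻ y : Euc n,
    ENNReal.ofReal |v x - v y| * ENNReal.ofReal (K (x - y))

end

open MeasureTheory Set Filter Metric Topology
open scoped ENNReal


noncomputable section OutMinAux

/-- Interaction functional. -/
def II {n : ℕ} (K : Euc n → ℝ) (X Y : Set (Euc n)) : ℝ≥0∞ :=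
  ∫⁻ x in X, ∫⁻ y in Y, ENNReal.ofReal (K (x - y))

lemma II_swap {n : ℕ} (K : Euc n → ℝ) (hKm : Measurable K)
    (hsym : ∀ x : Euc n, x ≠ 0 → K (-x) = K x) (X Y : Set (Euc n)) :
    II K X Y = II K Y X := by
  have hsym' : ∀ a b : Euc n, K (a - b) = K (b - a) := by
    intro a b
    by_cases h : a - b = 0
    · have h' : b - a = 0 := by rw [sub_eq_zero] at h ⊢; exact h.symm
      rw [h, h']
    · have := hsym (a - b) h
      rw [neg_sub] at this
      exact this.symm
  unfold II
  rw [lintegral_lintegral_swap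
    ((hKm.comp (measurable_fst.sub measurable_snd)).ennreal_ofReal).aemeasurable]
  exact lintegral_congr fun a => lintegral_congr fun b => by rw [hsym' b a]

lemma II_mono_right {n : ℕ} (K : Euc n → ℝ) (X : Set (Euc n)) {Y Z : Set (Euc n)}
    (h : Y ⊆ Z) : II K X Y ≤ II K X Z :=
  lintegral_mono fun _ => lintegral_mono' (Measure.restrict_mono h le_rfl) le_rfl

lemma II_union_left {n : ℕ} (K : Euc n → ℝ) {X Y : Set (Euc n)} (h : Disjoint X Y)
    (hY : MeasurableSet Y) (Z : Set (Euc n)) :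
    II K (X ∪ Y) Z = II K X Z + II K Y Z :=
  lintegral_union hY h

lemma II_union_right {n : ℕ} (K : Euc n → ℝ) (hKm : Measurable K) (X : Set (Euc n))
    {Y Z : Set (Euc n)} (h : Disjoint Y Z) (hZ : MeasurableSet Z) :
    II K X (Y ∪ Z) = II K X Y + II K X Z := by
  unfold II
  have hm : Measurable fun x : Euc n => ∫⁻ y in Y, ENNReal.ofReal (K (x - y)) :=
    Measurable.lintegral_prod_right
      ((hKm.comp (measurable_fst.sub measurable_snd)).ennreal_ofReal)
  rw [lintegral_congr fun x =>
      (lintegral_union hZ h : (∫⁻ y in Y ∪ Z, ENNReal.ofReal (K (x - y))) = _),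
    lintegral_add_left hm]

lemma perK_identity {n : ℕ} (K : Euc n → ℝ) (hKm : Measurable K)
    (hsym : ∀ x : Euc n, x ≠ 0 → K (-x) = K x)
    {Ω E A : Set (Euc n)} (hΩ : MeasurableSet Ω) (hE : MeasurableSet E)
    (hA : MeasurableSet A) (hAsub : A ⊆ Ω \ E) :
    perK K (E ∪ A) Ω + II K A E = perK K E Ω + II K A (E ∪ A)ᶜ := by
  have hAΩ : ∀ x, x ∈ A → x ∈ Ω := fun x hx => (hAsub hx).1
  have hAE : ∀ x, x ∈ A → x ∉ E := fun x hx => (hAsub hx).2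
  have hdEA : Disjoint E A := disjoint_right.mpr hAE
  have h2 : Ω \ E = (Ω \ (E ∪ A)) ∪ A := by
    ext x; have h1 := hAΩ x; have h2 := hAE x
    simp only [mem_diff, mem_union]; tauto
  have h3 : (E ∪ A) ∩ Ω = (E ∩ Ω) ∪ A := by
    ext x; have := hAΩ x
    simp only [mem_inter_iff, mem_union]; tauto
  have h4 : (Ω ∪ (E ∪ A))ᶜ = (Ω ∪ E)ᶜ := by
    ext x; have := hAΩ x
    simp only [mem_compl_iff, mem_union]; tauto
  have h5 : (E ∪ A)ᶜ = (Ω \ (E ∪ A)) ∪ (Ω ∪ E)ᶜ := by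
    ext x; have := hAΩ x
    simp only [mem_compl_iff, mem_union, mem_diff]; tauto
  have d1 : Disjoint (Ω \ (E ∪ A)) A :=
    disjoint_left.mpr fun x hx hxA => hx.2 (Or.inr hxA)
  have d2 : Disjoint (E ∩ Ω) A :=
    disjoint_right.mpr fun x hx hx' => hAE x hx hx'.1
  have d3 : Disjoint (Ω \ (E ∪ A)) ((Ω ∪ E)ᶜ) :=
    disjoint_left.mpr fun x hx hx' => hx' (Or.inl hx.1)
  have e1 : perK K (E ∪ A) Ω =
      II K E (Ω \ (E ∪ A)) + II K A (Ω \ (E ∪ A)) +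
      (II K (E ∩ Ω) (Ω ∪ E)ᶜ + II K A (Ω ∪ E)ᶜ) := by
    show II K (E ∪ A) (Ω \ (E ∪ A)) + II K ((E ∪ A) ∩ Ω) (Ω ∪ (E ∪ A))ᶜ = _
    rw [h4, h3, II_union_left K hdEA hA, II_union_left K d2 hA]
  have e2 : perK K E Ω =
      II K E (Ω \ (E ∪ A)) + II K E A + II K (E ∩ Ω) (Ω ∪ E)ᶜ := by
    show II K E (Ω \ E) + II K (E ∩ Ω) (Ω ∪ E)ᶜ = _
    rw [h2, II_union_right K hKm E d1 hA]
  have e3 : II K A (E ∪ A)ᶜ = II K A (Ω \ (E ∪ A)) + II K A (Ω ∪ E)ᶜ := by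
    rw [h5, II_union_right K hKm A d3 (hΩ.union hE).compl]
  have e4 : II K A E = II K E A := II_swap K hKm hsym A E
  rw [e1, e2, e3, e4]; ring

end OutMinAux

/-- characterization of `K`-outward minimality via exterior sets. -/
theorem outMin_iff_ext {n : ℕ} (K : Euc n → ℝ) (hK : KernelOK K)
    (Ω E : Set (Euc n)) (hΩ : IsOpen Ω) (hE : MeasurableSet E)
    (hfin : perK K E Ω < ⊤) :
    OutMin K E Ω ↔
      ∀ A : Set (Euc n), MeasurableSet A → A ⊆ Ω \ E → CptIn A Ω →
        (∫⁻ x in A, ∫⁻ y in E, ENNReal.ofReal (K (x - y))) ≤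
          ∫⁻ x in A, ∫⁻ y in (A ∪ E)ᶜ, ENNReal.ofReal (K (x - y)) := by
  have hKm := hK.1
  have hsym := hK.2.2.1
  constructor
  · intro hmin A hAmeas hAsub hcpt
    have hAE : Disjoint A E := disjoint_left.mpr fun x hx => (hAsub hx).2
    have key := perK_identity K hKm hsym hΩ.measurableSet hE hAmeas hAsub
    have hFE : (E ∪ A) \ E = A := by
      rw [union_diff_left]; exact hAE.sdiff_eq_left
    have hper : perK K E Ω ≤ perK K (E ∪ A) Ω :=
      hmin (E ∪ A) (hE.union hAmeas) subset_union_left (by rw [hFE]; exact hcpt)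
    have hle : perK K E Ω + II K A E ≤ perK K E Ω + II K A (E ∪ A)ᶜ := by
      calc perK K E Ω + II K A E ≤ perK K (E ∪ A) Ω + II K A E :=
            add_le_add_left hper _
        _ = perK K E Ω + II K A (E ∪ A)ᶜ := key
    have := (ENNReal.add_le_add_iff_left hfin.ne).mp hle
    show II K A E ≤ II K A (A ∪ E)ᶜ
    rwa [union_comm A E]
  · intro hext F hF hEF hcpt
    set A := F \ E with hAdef
    have hAmeas : MeasurableSet A := hF.diff hE
    have hAsub : A ⊆ Ω \ E := fun x hx => ⟨hcpt.2 (subset_closure hx), hx.2⟩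
    have hEA : E ∪ A = F := union_diff_cancel hEF
    have key := perK_identity K hKm hsym hΩ.measurableSet hE hAmeas hAsub
    rw [hEA] at key
    have hIAE : II K A E ≠ ⊤ := by
      have h1 : II K A E = II K E A := II_swap K hKm hsym A E
      have h2 : II K E A ≤ II K E (Ω \ E) := II_mono_right K E hAsub
      have h3 : II K E (Ω \ E) ≤ perK K E Ω := le_self_add
      exact (h1 ▸ ((h2.trans h3).trans_lt hfin)).ne
    have hle : II K A E ≤ II K A Fᶜ := by
      have := hext A hAmeas hAsub hcpt
      rwa [show A ∪ E = F from by rw [union_comm]; exact hEA] at this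
    have hfinal : perK K E Ω + II K A E ≤ perK K F Ω + II K A E := by
      rw [key]
      exact add_le_add_right hle _
    exact (ENNReal.add_le_add_iff_right hIAE).mp hfinal
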